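/- Let G be a directed graph, k ≥ 2, and for each walk W = v₁,…,vₖ and bijection l : [k] → [k] associate the monomial Π_{i=1}^{k−1} x_{vᵢ,vᵢ₊₁} · Π_{i=1}^{k} y_{vᵢ,l(i)} in the polynomial ring over a field of characteristic 2. Then the sum over all k-walks W and all bijections l of these monomials equals the sum restricted to k-walks W that are simple paths (i.e., all vertices distinct): the contributions of non-simple walks cancel over characteristic 2. -/
import Mathlib


open scoped Classical

/-- `w : Fin k → V` is a walk in the directed graph with edge relation `E`. -/
def IsDiWalk {V : Type*} (E : V → V → Prop) {k : ℕ} (w : Fin k → V) : Prop :=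
  ∀ i : ℕ, ∀ h : i + 1 < k, E (w ⟨i, Nat.lt_of_succ_lt h⟩) (w ⟨i + 1, h⟩)

/-- The monomial ∏ x_{v_i, v_{i+1}} · ∏ y_{v_i, l(i)} associated to a walk `w`
and a label bijection `σ`. -/
noncomputable def walkMonomial {V : Type*} (F : Type*) [Field F] {k : ℕ}
    (w : Fin k → V) (σ : Equiv.Perm (Fin k)) :
    MvPolynomial ((V × V) ⊕ (V × Fin k)) F :=
  (∏ i : Fin k, if h : (i : ℕ) + 1 < k then
      MvPolynomial.X (Sum.inl (w i, w ⟨(i : ℕ) + 1, h⟩)) else 1) *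
    ∏ i : Fin k, MvPolynomial.X (Sum.inr (w i, σ i))

lemma walkMonomial_swap {V : Type*} (F : Type*) [Field F] {k : ℕ}
    (w : Fin k → V) (σ : Equiv.Perm (Fin k)) {a b : Fin k} (hw : w a = w b) :
    walkMonomial F w (σ * Equiv.swap a b) = walkMonomial F w σ := by
  unfold walkMonomial
  congr 1
  have hcomp : w ∘ (Equiv.swap a b) = w := by
    funext t
    simp only [Function.comp]
    rcases eq_or_ne t a with rfl | hta
    · rw [Equiv.swap_apply_left]; exact hw.symm
    rcases eq_or_ne t b with rfl | htb
    · rw [Equiv.swap_apply_right]; exact hw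
    · rw [Equiv.swap_apply_of_ne_of_ne hta htb]
  calc ∏ i : Fin k, MvPolynomial.X (R := F) (σ := (V × V) ⊕ (V × Fin k))
        (Sum.inr (w i, (σ * Equiv.swap a b) i))
      = ∏ i : Fin k, MvPolynomial.X (R := F) (σ := (V × V) ⊕ (V × Fin k))
        (Sum.inr (w (Equiv.swap a b i), σ (Equiv.swap a b i))) := by
        refine Finset.prod_congr rfl fun i _ => ?_
        have : w (Equiv.swap a b i) = w i := congrFun hcomp i
        rw [this]; rfl
    _ = ∏ i : Fin k, MvPolynomial.X (Sum.inr (w i, σ i)) :=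
        Equiv.prod_comp (Equiv.swap a b)
          (fun i => MvPolynomial.X (Sum.inr (w i, σ i)))

lemma sum_perm_eq_zero_of_not_injective {V : Type*} (F : Type*) [Field F] [CharP F 2]
    {k : ℕ} {w : Fin k → V} (hw : ¬ Function.Injective w) :
    ∑ σ : Equiv.Perm (Fin k), walkMonomial F w σ = 0 := by
  simp only [Function.Injective, not_forall] at hw
  obtain ⟨a, b, hab, hne⟩ := hw
  refine Finset.sum_ninvolution (fun σ => σ * Equiv.swap a b) ?_ ?_ (fun _ => Finset.mem_univ _) ?_
  · intro σ
    rw [walkMonomial_swap F w σ hab, ← two_smul F (walkMonomial F w σ),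
      CharTwo.two_eq_zero, zero_smul]
  · intro σ _
    intro h
    exact hne (by simpa using h)
  · intro σ
    show σ * Equiv.swap a b * Equiv.swap a b = σ
    rw [mul_assoc, Equiv.swap_mul_self, mul_one]

theorem nonsimple_walks_cancel_char_two {V : Type*} [Fintype V] (E : V → V → Prop)
    (k : ℕ) (hk : 2 ≤ k) (F : Type*) [Field F] [CharP F 2] :
    ∑ w ∈ Finset.univ.filter (fun w : Fin k → V => IsDiWalk E w),
        ∑ σ : Equiv.Perm (Fin k), walkMonomial F w σ =
      ∑ w ∈ Finset.univ.filter
          (fun w : Fin k → V => IsDiWalk E w ∧ Function.Injective w),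
        ∑ σ : Equiv.Perm (Fin k), walkMonomial F w σ := by
  rw [Finset.sum_filter, Finset.sum_filter]
  refine Finset.sum_congr rfl fun w _ => ?_
  by_cases hwalk : IsDiWalk E w
  · by_cases hinj : Function.Injective w
    · simp [hwalk, hinj]
    · simp [hwalk, hinj, sum_perm_eq_zero_of_not_injective F hinj]
  · simp [hwalk]
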